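/- Let n and m be positive integers, let C be an m×n real matrix, D an invertible m×m real matrix, θ an invertible n×n real matrix, and F_r an n×n real matrix with μ∞(F_r) < 0. Then for every ε > 0 there exist an invertible m×m real matrix ρ, an m×m real matrix Q, and an m×n real matrix R such that the generalized unreduced Jacobian F = [[F_r + θ·Rᵀ·C·θ⁻¹, θ·Rᵀ·D·ρ⁻¹], [Qᵀ·C·θ⁻¹, Qᵀ·D·ρ⁻¹]] satisfies μ∞(F) ≤ μ∞(F_r)·(1 − ε). -/

import Mathlib

open Matrix Finset

/-- The ∞-norm matrix measure: `μ∞(M) = max_i ( M i i + ∑_{j ≠ i} |M i j| )`. -/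
noncomputable def muInfty {k : Type*} [Fintype k] [DecidableEq k]
    (M : Matrix k k ℝ) : ℝ :=
  ⨆ i, (M i i + ∑ j ∈ Finset.univ.erase i, |M i j|)

theorem stmt6 (n m : ℕ) (hn : 0 < n) (hm : 0 < m)
    (C : Matrix (Fin m) (Fin n) ℝ)
    (D : Matrix (Fin m) (Fin m) ℝ) (hD : IsUnit D.det)
    (θ : Matrix (Fin n) (Fin n) ℝ) (hθ : IsUnit θ.det)
    (Fr : Matrix (Fin n) (Fin n) ℝ) (hFr : muInfty Fr < 0)
    (ε : ℝ) (hε : 0 < ε) :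
    ∃ (ρ : Matrix (Fin m) (Fin m) ℝ) (Q : Matrix (Fin m) (Fin m) ℝ)
      (R : Matrix (Fin m) (Fin n) ℝ), IsUnit ρ.det ∧
      muInfty (Matrix.fromBlocks (Fr + θ * Rᵀ * C * θ⁻¹) (θ * Rᵀ * D * ρ⁻¹)
        (Qᵀ * C * θ⁻¹) (Qᵀ * D * ρ⁻¹)) ≤ muInfty Fr * (1 - ε) := by
  set A := C * θ⁻¹ with hA
  set T : ℝ := ∑ i, ∑ j, |A i j| with hT
  have hT0 : 0 ≤ T := Finset.sum_nonneg fun i _ =>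
    Finset.sum_nonneg fun j _ => abs_nonneg _
  set t : ℝ := 1 + T + |muInfty Fr * (1 - ε)| with ht
  have ht0 : 0 < t := by positivity
  set c : ℝ := -t⁻¹ with hc
  have hc0 : c ≠ 0 := by
    simp [hc, ne_of_gt ht0]
  have hcinv : c⁻¹ = -t := by
    rw [hc, neg_inv, inv_inv]
  refine ⟨c • D, 1, 0, ?_, ?_⟩
  · rw [Matrix.det_smul]
    exact (IsUnit.pow _ (isUnit_iff_ne_zero.mpr hc0)).mul hD
  · have hsmul : (c • D)⁻¹ = c⁻¹ • D⁻¹ :=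
      Matrix.inv_eq_left_inv (by
        rw [Matrix.smul_mul, Matrix.mul_smul, Matrix.nonsing_inv_mul D hD, smul_smul,
          inv_mul_cancel₀ hc0, one_smul])
    have hinv : D * (c • D)⁻¹ = (-t : ℝ) • 1 := by
      rw [hsmul, Matrix.mul_smul, Matrix.mul_nonsing_inv D hD, hcinv]
    -- simplify the blocks
    have hFF : Matrix.fromBlocks (Fr + θ * (0 : Matrix (Fin m) (Fin n) ℝ)ᵀ * C * θ⁻¹)
        (θ * (0 : Matrix (Fin m) (Fin n) ℝ)ᵀ * D * (c • D)⁻¹)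
        ((1 : Matrix (Fin m) (Fin m) ℝ)ᵀ * C * θ⁻¹)
        ((1 : Matrix (Fin m) (Fin m) ℝ)ᵀ * D * (c • D)⁻¹)
      = Matrix.fromBlocks Fr 0 A ((-t : ℝ) • 1) := by
      simp only [Matrix.transpose_zero, Matrix.mul_zero, Matrix.zero_mul,
        Matrix.transpose_one, Matrix.one_mul, add_zero, hinv, ← hA]
    rw [hFF]
    -- key inequality μ∞ Fr ≤ μ∞ Fr * (1 - ε)
    have hkey : muInfty Fr ≤ muInfty Fr * (1 - ε) := by nlinarith
    haveI : Nonempty (Fin n) := ⟨⟨0, hn⟩⟩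
    haveI : Nonempty (Fin m) := ⟨⟨0, hm⟩⟩
    set G := Matrix.fromBlocks Fr 0 A ((-t : ℝ) • (1 : Matrix (Fin m) (Fin m) ℝ)) with hG
    have herase : ∀ x, ∑ j ∈ Finset.univ.erase x, |G x j|
        = (∑ j, |G x j|) - |G x x| := by
      intro x
      rw [eq_sub_iff_add_eq, Finset.sum_erase_add _ _ (Finset.mem_univ _)]
    have herase' : ∀ (i : Fin n), ∑ j ∈ Finset.univ.erase i, |Fr i j|
        = (∑ j, |Fr i j|) - |Fr i i| := by
      intro i
      rw [eq_sub_iff_add_eq, Finset.sum_erase_add _ _ (Finset.mem_univ _)]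
    apply ciSup_le
    rintro (i | i)
    · -- top rows: equal to Fr's row value
      have hrow : G (Sum.inl i) (Sum.inl i)
          + ∑ j ∈ Finset.univ.erase (Sum.inl i), |G (Sum.inl i) j|
          = Fr i i + ∑ j ∈ Finset.univ.erase i, |Fr i j| := by
        rw [herase, herase', Fintype.sum_sum_type]
        simp [hG]
      rw [hrow]
      refine le_trans ?_ hkey
      rw [muInfty]
      exact le_ciSup (f := fun i => Fr i i + ∑ j ∈ Finset.univ.erase i, |Fr i j|)
        (Set.Finite.bddAbove (Set.finite_range _)) i
    · -- bottom rows
      have h2 : ∑ j : Fin m, |((-t : ℝ) • (1 : Matrix (Fin m) (Fin m) ℝ)) i j|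
          = |(-t : ℝ)| := by
        rw [Finset.sum_eq_single i]
        · simp
        · intro b _ hb
          simp [Matrix.one_apply, Ne.symm hb]
        · simp
      have hrow : G (Sum.inr i) (Sum.inr i)
          + ∑ j ∈ Finset.univ.erase (Sum.inr i), |G (Sum.inr i) j|
          = -t + ∑ j, |A i j| := by
        rw [herase, Fintype.sum_sum_type]
        simp only [hG, Matrix.fromBlocks_apply₂₁, Matrix.fromBlocks_apply₂₂, h2]
        have : ((-t : ℝ) • (1 : Matrix (Fin m) (Fin m) ℝ)) i i = -t := by simp
        rw [this, abs_neg, abs_of_pos ht0]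
        ring
      rw [hrow]
      have hSi : ∑ j, |A i j| ≤ T := by
        rw [hT]
        exact Finset.single_le_sum (f := fun i => ∑ j, |A i j|)
          (fun i _ => Finset.sum_nonneg fun j _ => abs_nonneg _) (Finset.mem_univ i)
      have hb : -t + ∑ j, |A i j| ≤ -1 - |muInfty Fr * (1 - ε)| := by
        rw [ht]; push_cast; linarith
      refine le_trans hb ?_
      have := neg_abs_le (muInfty Fr * (1 - ε))
      linarith
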